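/- Let p be a prime, n ≥ 1, and F an algebraically closed field whose characteristic is zero or different from p. Let G be a cyclic group of order p^n with generator x, and set x_i = x^{p^{n−i}} for i = 1, …, n. For each ζ ∈ F with ζ^{p^n} = 1, set ζ_i = ζ^{p^{n−i}} and define e(ζ) = Π_{i=1}^{n} (1/p) Σ_{k=0}^{p−1} ζ_i^{−k} x_i^{k} ∈ F[G]. Then every e(ζ) is a primitive central idempotent of F[G], and every primitive central idempotent of F[G] equals e(ζ) for some ζ ∈ F with ζ^{p^n} = 1. -/

import Mathlib

open Finset

lemma aux_sum_range_mul {A : Type*} [CommRing A] (y : A) (a : ℕ) :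
    ∀ b, ∑ m ∈ Finset.range (a * b), y ^ m
      = (∑ i ∈ Finset.range a, y ^ i) * ∑ j ∈ Finset.range b, (y ^ a) ^ j := by
  intro b
  induction b with
  | zero => simp
  | succ b ih =>
    rw [Nat.mul_succ, Finset.sum_range_add, ih, Finset.sum_range_succ, mul_add]
    congr 1
    rw [Finset.sum_mul]
    refine Finset.sum_congr rfl fun i _ => ?_
    rw [pow_add, pow_mul, mul_comm]

lemma aux_geom_prod {A : Type*} [CommRing A] (y : A) (p : ℕ) :
    ∀ n, (∏ j ∈ Finset.range n, ∑ k ∈ Finset.range p, (y ^ p ^ j) ^ k)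
      = ∑ m ∈ Finset.range (p ^ n), y ^ m := by
  intro n
  induction n with
  | zero => simp
  | succ n ih =>
    rw [Finset.prod_range_succ, ih, pow_succ, aux_sum_range_mul]

lemma aux_prod_const_smul {ι : Type*} {α β : Type*} [Monoid α] [CommMonoid β]
    [MulAction α β] [IsScalarTower α β β] [SMulCommClass α β β]
    (s : Finset ι) (c : α) (f : ι → β) :
    ∏ i ∈ s, c • f i = c ^ s.card • ∏ i ∈ s, f i := by
  induction s using Finset.cons_induction_on with
  | empty => simp
  | cons _ _ hj ih =>
    rw [Finset.prod_cons, ih, Finset.card_cons, smul_mul_smul_comm, Finset.prod_cons,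
      pow_succ']

/-- A primitive central idempotent of a ring: a nonzero central idempotent that cannot be
written as the sum of two nonzero orthogonal central idempotents. -/
def IsPrimitiveCentralIdempotent {A : Type} [Ring A] (e : A) : Prop :=
  e ≠ 0 ∧ e ∈ Set.center A ∧ e * e = e ∧
    ¬ ∃ e₁ e₂ : A, e₁ ≠ 0 ∧ e₂ ≠ 0 ∧ e₁ ∈ Set.center A ∧ e₂ ∈ Set.center A ∧
      e₁ * e₁ = e₁ ∧ e₂ * e₂ = e₂ ∧ e₁ * e₂ = 0 ∧ e₂ * e₁ = 0 ∧ e = e₁ + e₂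

theorem stmt_15 (p : ℕ) (hp : p.Prime) (n : ℕ) (hn : 1 ≤ n)
    (F : Type) [Field F] [IsAlgClosed F]
    (hchar : ringChar F = 0 ∨ ringChar F ≠ p)
    (G : Type) [CommGroup G] [Fintype G] (hG : Fintype.card G = p ^ n)
    (x : G) (hx : ∀ g : G, g ∈ Subgroup.zpowers x)
    (e : F → MonoidAlgebra F G)
    (he : ∀ ζ : F, e ζ = ∏ i ∈ Finset.Icc 1 n,
      ((p : F)⁻¹ • ∑ k ∈ Finset.range p,
        ((ζ ^ p ^ (n - i))⁻¹) ^ k • MonoidAlgebra.of F G ((x ^ p ^ (n - i)) ^ k))) :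
    (∀ ζ : F, ζ ^ p ^ n = 1 → IsPrimitiveCentralIdempotent (e ζ)) ∧
      (∀ e' : MonoidAlgebra F G, IsPrimitiveCentralIdempotent e' →
        ∃ ζ : F, ζ ^ p ^ n = 1 ∧ e' = e ζ) := by
  classical
  set N := p ^ n with hNdef
  have hNpos : 0 < N := pow_pos hp.pos n
  -- the cast of p and N to F are nonzero
  have hpF : (p : F) ≠ 0 := by
    intro h
    have hdvd : ringChar F ∣ p := ringChar.dvd h
    rcases hchar with h0 | hne
    · rw [h0] at hdvd
      exact hp.pos.ne' (Nat.eq_zero_of_zero_dvd hdvd)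
    · rcases (Nat.Prime.eq_one_or_self_of_dvd hp _ hdvd) with h1 | h1
      · exact CharP.ringChar_ne_one h1
      · exact hne h1
  have hNF : (N : F) ≠ 0 := by
    rw [hNdef, Nat.cast_pow]
    exact pow_ne_zero n hpF
  -- order of x
  have hord : orderOf x = N := by
    rw [orderOf_eq_card_of_forall_mem_zpowers hx, Nat.card_eq_fintype_card, hG]
  have hxN : x ^ N = 1 := by rw [← hord]; exact pow_orderOf_eq_one x
  -- the standard idempotents
  set y : F → MonoidAlgebra F G := fun ζ => ζ⁻¹ • MonoidAlgebra.of F G x with hydef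
  set E : F → MonoidAlgebra F G :=
    fun ζ => (N : F)⁻¹ • ∑ m ∈ Finset.range N, (y ζ) ^ m with hEdef
  -- e ζ = E ζ
  have heE : ∀ ζ : F, e ζ = E ζ := by
    intro ζ
    rw [he ζ]
    have step1 : ∀ i ∈ Finset.Icc 1 n,
        ((p : F)⁻¹ • ∑ k ∈ Finset.range p,
          ((ζ ^ p ^ (n - i))⁻¹) ^ k • MonoidAlgebra.of F G ((x ^ p ^ (n - i)) ^ k))
        = (p : F)⁻¹ • ∑ k ∈ Finset.range p, ((y ζ) ^ p ^ (n - i)) ^ k := by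
      intro i _
      congr 1
      refine Finset.sum_congr rfl fun k _ => ?_
      rw [hydef]
      simp only [smul_pow, map_pow, inv_pow]
    rw [Finset.prod_congr rfl step1, aux_prod_const_smul, Nat.card_Icc]
    have hre : ∏ i ∈ Finset.Icc 1 n, (∑ k ∈ Finset.range p, ((y ζ) ^ p ^ (n - i)) ^ k)
        = ∏ j ∈ Finset.range n, ∑ k ∈ Finset.range p, ((y ζ) ^ p ^ j) ^ k := by
      refine Finset.prod_bij' (fun i _ => n - i) (fun j _ => n - j) ?_ ?_ ?_ ?_ ?_
      · intro a ha; simp only [Finset.mem_Icc] at ha; simp only [Finset.mem_range]; omega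
      · intro a ha; simp only [Finset.mem_range] at ha; simp only [Finset.mem_Icc]; omega
      · intro a ha; simp only [Finset.mem_Icc] at ha; beta_reduce; omega
      · intro a ha; simp only [Finset.mem_range] at ha; beta_reduce; omega
      · intro a _; rfl
    rw [hre, aux_geom_prod, hEdef]
    simp only [Nat.add_sub_cancel]
    rw [inv_pow, ← Nat.cast_pow, ← hNdef]
  -- basic facts about E ζ for a root of unity ζ
  have hyN : ∀ ζ : F, ζ ^ N = 1 → (y ζ) ^ N = 1 := by
    intro ζ hζ
    rw [hydef]
    simp only [smul_pow, ← map_pow, hxN, map_one, inv_pow, hζ, inv_one, one_smul]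
  have hshift : ∀ ζ : F, ζ ^ N = 1 → y ζ * E ζ = E ζ := by
    intro ζ hζ
    rw [hEdef]
    simp only []
    rw [mul_smul_comm, Finset.mul_sum]
    congr 1
    have h2 := Finset.sum_range_succ' (fun m => (y ζ) ^ m) N
    rw [Finset.sum_range_succ (fun m => (y ζ) ^ m) N] at h2
    simp only [hyN ζ hζ, pow_zero] at h2
    have : ∑ m ∈ Finset.range N, (y ζ) ^ (m + 1) = ∑ m ∈ Finset.range N, (y ζ) ^ m := by
      exact (add_right_cancel h2.symm)
    calc ∑ m ∈ Finset.range N, y ζ * (y ζ) ^ m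
        = ∑ m ∈ Finset.range N, (y ζ) ^ (m + 1) := by
          refine Finset.sum_congr rfl fun m _ => ?_; rw [pow_succ']
      _ = ∑ m ∈ Finset.range N, (y ζ) ^ m := this
  have hofx : ∀ ζ : F, ζ ^ N = 1 → MonoidAlgebra.of F G x * E ζ = ζ • E ζ := by
    intro ζ hζ
    have hζ0 : ζ ≠ 0 := by
      intro h; rw [h] at hζ; simp [zero_pow hNpos.ne'] at hζ
    have hofy : MonoidAlgebra.of F G x = ζ • y ζ := by
      rw [hydef]; simp only [smul_smul, mul_inv_cancel₀ hζ0, one_smul]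
    rw [hofy, smul_mul_assoc, hshift ζ hζ]
  have hpowx : ∀ ζ : F, ζ ^ N = 1 → ∀ m : ℕ,
      (MonoidAlgebra.of F G x) ^ m * E ζ = ζ ^ m • E ζ := by
    intro ζ hζ m
    induction m with
    | zero => simp
    | succ m ih =>
      rw [pow_succ, mul_assoc, hofx ζ hζ, mul_smul_comm, ih, smul_smul, pow_succ, mul_comm ζ (ζ ^ m)]
  -- every element times E ζ is a scalar multiple of E ζ
  have hmulE : ∀ ζ : F, ζ ^ N = 1 → ∀ a : MonoidAlgebra F G, ∃ c : F, a * E ζ = c • E ζ := by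
    intro ζ hζ a
    induction a using MonoidAlgebra.induction_linear with
    | zero => exact ⟨0, by simp⟩
    | add f g hf hg =>
      obtain ⟨c1, hc1⟩ := hf; obtain ⟨c2, hc2⟩ := hg
      exact ⟨c1 + c2, by rw [add_mul, hc1, hc2, add_smul]⟩
    | single g b =>
      obtain ⟨m, hm⟩ : ∃ m : ℕ, x ^ m = g := by
        have := (isOfFinOrder_of_finite x).mem_powers_iff_mem_zpowers.mpr (hx g)
        exact Submonoid.mem_powers_iff g x |>.mp this
      refine ⟨b * ζ ^ m, ?_⟩
      have h7 : (MonoidAlgebra.single g b : MonoidAlgebra F G)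
          = b • (MonoidAlgebra.of F G x) ^ m := by
        rw [← map_pow, hm]
        exact (MonoidAlgebra.smul_of _ _).symm
      rw [h7, smul_mul_assoc, hpowx ζ hζ m, smul_smul]
  -- orthogonality
  have hEE : ∀ ξ ζ : F, ξ ^ N = 1 → ζ ^ N = 1 →
      E ξ * E ζ = if ξ = ζ then E ζ else 0 := by
    intro ξ ζ hξ hζ
    have hξ0 : ξ ≠ 0 := by
      intro h; rw [h] at hξ; simp [zero_pow hNpos.ne'] at hξ
    have key : E ξ * E ζ = ((N : F)⁻¹ * ∑ m ∈ Finset.range N, (ξ⁻¹ * ζ) ^ m) • E ζ := by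
      rw [hEdef]
      simp only []
      rw [smul_mul_assoc, Finset.sum_mul]
      have : ∀ m : ℕ, (y ξ) ^ m * E ζ = (ξ⁻¹ * ζ) ^ m • E ζ := by
        intro m
        rw [hydef]
        simp only [smul_pow]
        rw [smul_mul_assoc, hpowx ζ hζ m, smul_smul, ← mul_pow]
      rw [Finset.sum_congr rfl fun m _ => this m, ← Finset.sum_smul, smul_smul]
    by_cases heq : ξ = ζ
    · subst heq
      rw [if_pos rfl, key]
      simp only [inv_mul_cancel₀ hξ0, one_pow, Finset.sum_const, Finset.card_range,
        nsmul_eq_mul, mul_one]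
      rw [inv_mul_cancel₀ hNF, one_smul]
    · rw [if_neg heq, key]
      have hω1 : ξ⁻¹ * ζ ≠ 1 := by
        intro h
        apply heq
        field_simp at h
        exact h.symm
      have hωN : (ξ⁻¹ * ζ) ^ N = 1 := by
        rw [mul_pow, inv_pow, hξ, hζ, inv_one, one_mul]
      have := geom_sum_mul (ξ⁻¹ * ζ) N
      rw [hωN, sub_self] at this
      rcases mul_eq_zero.mp this with h | h
      · rw [h, mul_zero, zero_smul]
      · exact absurd (sub_eq_zero.mp h) hω1
  -- E ζ is nonzero
  have hypow : ∀ ζ : F, ∀ m : ℕ,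
      (y ζ) ^ m = (MonoidAlgebra.single (x ^ m) ((ζ⁻¹) ^ m) : MonoidAlgebra F G) := by
    intro ζ m
    rw [hydef]
    simp only [smul_pow, ← map_pow]
    exact MonoidAlgebra.smul_of _ _
  have hEne : ∀ ζ : F, ζ ^ N = 1 → E ζ ≠ 0 := by
    intro ζ hζ hE0
    have h1 : (E ζ).coeff (1 : G) = (N : F)⁻¹ := by
      rw [hEdef]
      simp only []
      rw [MonoidAlgebra.coeff_smul_apply, MonoidAlgebra.coeff_sum, Finsupp.finset_sum_apply]
      have : ∀ m ∈ Finset.range N,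
          ((y ζ) ^ m).coeff (1 : G) = if m = 0 then (1 : F) else 0 := by
        intro m hm
        rw [hypow, MonoidAlgebra.coeff_single, Finsupp.single_apply]
        by_cases h0 : m = 0
        · subst h0; simp
        · rw [if_neg h0, if_neg]
          intro hxm
          have : N ∣ m := by rw [← hord]; exact orderOf_dvd_of_pow_eq_one hxm
          have := Nat.le_of_dvd (Nat.pos_of_ne_zero h0) this
          rw [Finset.mem_range] at hm
          omega
      rw [Finset.sum_congr rfl this, Finset.sum_ite_eq' (Finset.range N) 0 (fun _ => (1:F))]
      rw [if_pos (Finset.mem_range.mpr hNpos)]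
      rw [smul_eq_mul, mul_one]
    rw [hE0] at h1
    simp only [MonoidAlgebra.coeff_zero, Finsupp.coe_zero, Pi.zero_apply] at h1
    exact inv_ne_zero hNF h1.symm
  -- sum of all E ζ over N-th roots of unity is 1
  haveI : NeZero ((N : ℕ) : F) := ⟨hNF⟩
  obtain ⟨ω, hω⟩ := HasEnoughRootsOfUnity.exists_primitiveRoot F N
  set S : Finset F := Polynomial.nthRootsFinset N (1 : F) with hSdef
  have hSmem : ∀ ζ : F, ζ ∈ S ↔ ζ ^ N = 1 := by
    intro ζ; rw [hSdef]; exact Polynomial.mem_nthRootsFinset hNpos (1 : F)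
  have hScard : S.card = N := hω.card_nthRootsFinset
  have hT : ∀ m : ℕ, m ∈ Finset.range N →
      (∑ ζ ∈ S, (ζ⁻¹) ^ m) = if m = 0 then (N : F) else 0 := by
    intro m hm
    rw [Finset.mem_range] at hm
    by_cases h0 : m = 0
    · subst h0; simp [hScard]
    · rw [if_neg h0]
      have hωS : ∀ ζ ∈ S, ω * ζ ∈ S := by
        intro ζ hζ
        rw [hSmem] at hζ ⊢
        rw [mul_pow, hω.pow_eq_one, hζ, one_mul]
      have hωinvS : ∀ ζ ∈ S, ω⁻¹ * ζ ∈ S := by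
        intro ζ hζ
        rw [hSmem] at hζ ⊢
        rw [mul_pow, inv_pow, hω.pow_eq_one, inv_one, hζ, one_mul]
      have hω0 : ω ≠ 0 := by
        intro h
        have h1 := hω.pow_eq_one
        rw [h, zero_pow hNpos.ne'] at h1
        exact zero_ne_one h1
      have key : ∑ ζ ∈ S, ((ω * ζ)⁻¹) ^ m = ∑ ζ ∈ S, (ζ⁻¹) ^ m := by
        refine Finset.sum_bij' (fun ζ _ => ω * ζ) (fun ζ _ => ω⁻¹ * ζ) hωS hωinvS ?_ ?_ ?_
        · intro ζ _; beta_reduce; rw [← mul_assoc, inv_mul_cancel₀ hω0, one_mul]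
        · intro ζ _; beta_reduce; rw [← mul_assoc, mul_inv_cancel₀ hω0, one_mul]
        · intro ζ _; rfl
      have key2 : ∑ ζ ∈ S, ((ω * ζ)⁻¹) ^ m
          = (ω⁻¹) ^ m * ∑ ζ ∈ S, (ζ⁻¹) ^ m := by
        rw [Finset.mul_sum]
        refine Finset.sum_congr rfl fun ζ _ => ?_
        rw [mul_inv, mul_pow]
      have hωm : (ω⁻¹) ^ m ≠ 1 := by
        intro h
        rw [inv_pow, inv_eq_one] at h
        exact hω.pow_ne_one_of_pos_of_lt h0 hm h
      have : ((ω⁻¹) ^ m - 1) * ∑ ζ ∈ S, (ζ⁻¹) ^ m = 0 := by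
        rw [sub_mul, one_mul, ← key2, key, sub_self]
      rcases mul_eq_zero.mp this with h | h
      · exact absurd (sub_eq_zero.mp h) hωm
      · exact h
  have hsum1 : ∑ ζ ∈ S, E ζ = 1 := by
    rw [hEdef]
    simp only []
    rw [← Finset.smul_sum]
    rw [Finset.sum_comm]
    have h1 : ∀ m ∈ Finset.range N,
        (∑ ζ ∈ S, (y ζ) ^ m)
          = (MonoidAlgebra.single (x ^ m) (if m = 0 then (N : F) else 0) : MonoidAlgebra F G) := by
      intro m hm
      rw [← hT m hm]
      show _ = MonoidAlgebra.singleAddHom (x ^ m) (∑ ζ ∈ S, (ζ⁻¹) ^ m)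
      rw [map_sum]
      refine Finset.sum_congr rfl fun ζ _ => ?_
      rw [hypow]; rfl
    rw [Finset.sum_congr rfl h1]
    have h2 : ∀ m ∈ Finset.range N,
        (MonoidAlgebra.single (x ^ m) (if m = 0 then (N : F) else 0) : MonoidAlgebra F G)
          = if m = 0 then (MonoidAlgebra.single (x ^ m) ((N : F)) : MonoidAlgebra F G) else 0 := by
      intro m _
      split
      · rfl
      · exact MonoidAlgebra.single_zero _
    rw [Finset.sum_congr rfl h2,
      Finset.sum_ite_eq' (Finset.range N) 0
        (fun m => (MonoidAlgebra.single (x ^ m) ((N : F)) : MonoidAlgebra F G)),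
      if_pos (Finset.mem_range.mpr hNpos), pow_zero, MonoidAlgebra.smul_single',
      inv_mul_cancel₀ hNF]
    exact (MonoidAlgebra.one_def).symm
  -- idempotent dichotomy
  have hEid : ∀ ζ : F, ζ ^ N = 1 → E ζ * E ζ = E ζ := by
    intro ζ hζ; rw [hEE ζ ζ hζ hζ, if_pos rfl]
  have hdich : ∀ ζ : F, ζ ^ N = 1 → ∀ a : MonoidAlgebra F G, a * a = a →
      a * E ζ = 0 ∨ a * E ζ = E ζ := by
    intro ζ hζ a ha
    obtain ⟨c, hc⟩ := hmulE ζ hζ a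
    have h3 : (a * E ζ) * (a * E ζ) = a * E ζ := by
      calc (a * E ζ) * (a * E ζ) = (a * a) * (E ζ * E ζ) := by ring
      _ = a * E ζ := by rw [ha, hEid ζ hζ]
    rw [hc] at h3
    rw [smul_mul_smul_comm, hEid ζ hζ] at h3
    have hsub : (c * c - c) • E ζ = 0 := by rw [sub_smul, h3, sub_self]
    have hcc : c * c - c = 0 := by
      by_contra hne
      have h5 := congrArg (fun z => (c * c - c)⁻¹ • z) hsub
      simp only [smul_smul, inv_mul_cancel₀ hne, one_smul, smul_zero] at h5
      exact hEne ζ hζ h5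
    have h6 : c * (c - 1) = 0 := by rw [mul_sub, mul_one]; exact hcc
    rcases mul_eq_zero.mp h6 with h | h
    · left; rw [hc, h, zero_smul]
    · right; rw [hc, sub_eq_zero.mp h, one_smul]
  have hcent : ∀ a : MonoidAlgebra F G, a ∈ Set.center (MonoidAlgebra F G) := by
    intro a
    rw [Set.center_eq_univ]
    trivial
  -- products of sums of idempotents
  have hsumEmul : ∀ U : Finset F, U ⊆ S → ∀ ζ ∈ S,
      (∑ ξ ∈ U, E ξ) * E ζ = if ζ ∈ U then E ζ else 0 := by
    intro U hU ζ hζS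
    rw [Finset.sum_mul]
    have h1 : ∀ ξ ∈ U, E ξ * E ζ = if ξ = ζ then E ζ else 0 := fun ξ hξ =>
      hEE ξ ζ ((hSmem ξ).mp (hU hξ)) ((hSmem ζ).mp hζS)
    rw [Finset.sum_congr rfl h1, Finset.sum_ite_eq' U ζ (fun _ => E ζ)]
  constructor
  · -- each e ζ is a primitive central idempotent
    intro ζ hζ
    rw [heE]
    refine ⟨hEne ζ hζ, hcent _, hEid ζ hζ, ?_⟩
    rintro ⟨e₁, e₂, h1, h2, -, -, hi1, hi2, ho12, ho21, hadd⟩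
    have he1E : e₁ * E ζ = e₁ := by rw [hadd, mul_add, hi1, ho12, add_zero]
    rcases hdich ζ hζ e₁ hi1 with h | h
    · exact h1 (by rw [← he1E, h])
    · have he1 : e₁ = E ζ := by rw [← he1E, h]
      rw [← he1] at hadd
      exact h2 (left_eq_add.mp hadd)
  · -- completeness
    rintro e' ⟨hne, -, hid, hprim⟩
    set T : Finset F := S.filter (fun ζ => e' * E ζ = E ζ) with hTdef
    have hTsub : T ⊆ S := Finset.filter_subset _ _
    have hTroot : ∀ ζ ∈ T, ζ ^ N = 1 := fun ζ hζ => (hSmem ζ).mp (hTsub hζ)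
    have he'T : e' = ∑ ζ ∈ T, E ζ := by
      conv_lhs => rw [← mul_one e', ← hsum1, Finset.mul_sum]
      rw [← Finset.sum_filter_add_sum_filter_not S (fun ζ => e' * E ζ = E ζ)
        (fun ζ => e' * E ζ)]
      have hz : ∀ ζ ∈ S.filter (fun ζ => ¬(e' * E ζ = E ζ)), e' * E ζ = 0 := by
        intro ζ hζ
        rw [Finset.mem_filter] at hζ
        rcases hdich ζ ((hSmem ζ).mp hζ.1) e' hid with h | h
        · exact h
        · exact absurd h hζ.2
      rw [Finset.sum_congr rfl hz, Finset.sum_const_zero, add_zero]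
      exact Finset.sum_congr rfl fun ζ hζ => (Finset.mem_filter.mp hζ).2
    have hTne : T.Nonempty := by
      by_contra h
      rw [Finset.not_nonempty_iff_eq_empty] at h
      rw [h, Finset.sum_empty] at he'T
      exact hne he'T
    obtain ⟨ζ₀, hζ₀⟩ := hTne
    have hT1 : T = {ζ₀} := by
      refine Finset.eq_singleton_iff_unique_mem.mpr ⟨hζ₀, fun ζ₁ hζ₁ => ?_⟩
      by_contra hne01
      apply hprim
      have herase : T.erase ζ₀ ⊆ S := (Finset.erase_subset _ _).trans hTsub
      have hζ₁e : ζ₁ ∈ T.erase ζ₀ := Finset.mem_erase.mpr ⟨hne01, hζ₁⟩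
      refine ⟨E ζ₀, ∑ ξ ∈ T.erase ζ₀, E ξ, hEne ζ₀ (hTroot ζ₀ hζ₀), ?_, hcent _, hcent _,
        hEid ζ₀ (hTroot ζ₀ hζ₀), ?_, ?_, ?_, ?_⟩
      · -- second sum nonzero
        intro h0
        have := hsumEmul (T.erase ζ₀) herase ζ₁ (hTsub hζ₁)
        rw [h0, zero_mul, if_pos hζ₁e] at this
        exact hEne ζ₁ (hTroot ζ₁ hζ₁) this.symm
      · -- idempotent
        rw [Finset.mul_sum]
        refine Finset.sum_congr rfl fun ξ hξ => ?_
        rw [hsumEmul (T.erase ζ₀) herase ξ (herase hξ), if_pos hξ]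
      · -- E ζ₀ * sum = 0
        rw [Finset.mul_sum]
        refine Finset.sum_eq_zero fun ξ hξ => ?_
        rw [hEE ζ₀ ξ (hTroot ζ₀ hζ₀) ((hSmem ξ).mp (herase hξ)),
          if_neg (Ne.symm (Finset.mem_erase.mp hξ).1)]
      · -- sum * E ζ₀ = 0
        rw [hsumEmul (T.erase ζ₀) herase ζ₀ (hTsub hζ₀),
          if_neg (Finset.notMem_erase ζ₀ T)]
      · rw [he'T, ← Finset.add_sum_erase T E hζ₀]
    exact ⟨ζ₀, hTroot ζ₀ hζ₀, by rw [heE, he'T, hT1, Finset.sum_singleton]⟩
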